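/- Let 1 ≤ k ≤ n be integers and let ρ₀ ∈ Ω₀ be the step configuration ρ₀(x) := 1 if x ≤ k and 0 otherwise. Let m_1, …, m_N be any finite sequence of integers, and let j_1 < j_2 < ⋯ < j_r be exactly those indices j for which 1 ≤ m_j ≤ n−1. Then B_n R_k (J_{m_N} ∘ ⋯ ∘ J_{m_1})(ρ₀) = (J_{m_{j_r}} ∘ ⋯ ∘ J_{m_{j_1}})(B_n R_k ρ₀); that is, the result of applying all the jumps and then cutting off and pushing back equals the result of applying, in the same order, only the jumps at positions inside [1, n−1] to the pushed-back cut-off initial configuration. (Deterministic version of Lemma 3.3) -/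

import Mathlib

open Set

/-- `Ω₀`: a configuration `ρ : ℤ → Bool` is admissible when its support
`{x : ℤ | ρ x = true}` is bounded above. -/
def BddSupport (ρ : ℤ → Bool) : Prop := BddAbove {x : ℤ | ρ x = true}

/-- The queue-length `S(ρ, x)`: the number of particles of `ρ` strictly to the right
of `x`. -/
noncomputable def qS (ρ : ℤ → Bool) (x : ℤ) : ℕ :=
  {y : ℤ | x < y ∧ ρ y = true}.ncard

/-- The cut-off operator `R_k`: keeps only the `k` rightmost particles. -/
noncomputable def Rk (k : ℕ) (ρ : ℤ → Bool) : ℤ → Bool :=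
  fun x => if qS ρ x < k then ρ x else false

/-- The push-back operator `B_n`: pushes all particles back into `(-∞, n]`,
preserving the exclusion. -/
noncomputable def Bn (n : ℤ) (ρ : ℤ → Bool) : ℤ → Bool :=
  fun x =>
    if n < x then false
    else if n - x < (qS ρ x : ℤ) then true
    else ρ x

/-- The jump operator `J_m`: exchanges the values of `ρ` at `m` and `m+1` if
`ρ(m) = 1` and `ρ(m+1) = 0`, and leaves `ρ` unchanged otherwise. -/
def Jm (m : ℤ) (ρ : ℤ → Bool) : ℤ → Bool :=
  fun x =>
    if ρ m = true ∧ ρ (m + 1) = false then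
      if x = m then ρ (m + 1) else if x = m + 1 then ρ m else ρ x
    else ρ x

def UB (ρ : ℤ → Bool) (M : ℤ) : Prop := ∀ y, M < y → ρ y = false

lemma finite_qset {ρ : ℤ → Bool} {M : ℤ} (hM : UB ρ M) (x : ℤ) :
    {y : ℤ | x < y ∧ ρ y = true}.Finite := by
  apply (Set.finite_Ioc x M).subset
  rintro y ⟨hy, hρ⟩
  refine ⟨hy, ?_⟩
  by_contra h
  rw [hM y (by omega)] at hρ
  exact absurd hρ (by simp)

lemma qS_zero {ρ : ℤ → Bool} {M : ℤ} (hM : UB ρ M) {x : ℤ} (hx : M ≤ x) : qS ρ x = 0 := by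
  have h : {y : ℤ | x < y ∧ ρ y = true} = ∅ := by
    ext y
    simp only [Set.mem_setOf_eq, Set.mem_empty_iff_false, iff_false, not_and]
    intro hy
    simp [hM y (by omega)]
  rw [qS, h, Set.ncard_empty]

lemma qS_succ {ρ : ℤ → Bool} {M : ℤ} (hM : UB ρ M) (x : ℤ) :
    qS ρ x = (if ρ (x+1) = true then 1 else 0) + qS ρ (x+1) := by
  by_cases h : ρ (x+1) = true
  · have hset : {y : ℤ | x < y ∧ ρ y = true} = insert (x+1) {y : ℤ | x+1 < y ∧ ρ y = true} := by
      ext y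
      simp only [Set.mem_setOf_eq, Set.mem_insert_iff]
      constructor
      · rintro ⟨hy, hρ⟩
        rcases eq_or_lt_of_le (by omega : x + 1 ≤ y) with h' | h'
        · exact Or.inl h'.symm
        · exact Or.inr ⟨h', hρ⟩
      · rintro (rfl | ⟨hy, hρ⟩)
        · exact ⟨by omega, h⟩
        · exact ⟨by omega, hρ⟩
    rw [if_pos h]
    show {y : ℤ | x < y ∧ ρ y = true}.ncard = 1 + qS ρ (x+1)
    rw [hset, Set.ncard_insert_of_notMem (by simp) (finite_qset hM (x+1))]
    rw [qS, Nat.add_comm]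
  · have hset : {y : ℤ | x < y ∧ ρ y = true} = {y : ℤ | x+1 < y ∧ ρ y = true} := by
      ext y
      simp only [Set.mem_setOf_eq]
      constructor
      · rintro ⟨hy, hρ⟩
        refine ⟨?_, hρ⟩
        rcases eq_or_lt_of_le (by omega : x + 1 ≤ y) with h' | h'
        · exact absurd (h' ▸ hρ) h
        · exact h'
      · rintro ⟨hy, hρ⟩
        exact ⟨by omega, hρ⟩
    rw [if_neg h, qS, hset, qS, Nat.zero_add]

lemma qS_pred {ρ : ℤ → Bool} {M : ℤ} (hM : UB ρ M) (x : ℤ) :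
    qS ρ (x-1) = (if ρ x = true then 1 else 0) + qS ρ x := by
  have := qS_succ hM (x-1)
  simpa using this

lemma down_ind (M : ℤ) (P : ℤ → Prop) (base : ∀ x, M ≤ x → P x)
    (step : ∀ x, x < M → P (x+1) → P x) : ∀ x, P x := by
  have key : ∀ j : ℕ, ∀ x : ℤ, M - x ≤ j → P x := by
    intro j
    induction j with
    | zero => intro x hx; exact base x (by omega)
    | succ j ih =>
      intro x hx
      by_cases h : M ≤ x
      · exact base x h
      · exact step x (by omega) (ih (x+1) (by omega))
  intro x
  exact key (M - x).toNat x (by omega)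

lemma ext_of_qS {ρ σ : ℤ → Bool} {Mρ Mσ : ℤ} (hρ : UB ρ Mρ) (hσ : UB σ Mσ)
    (h : ∀ x, qS ρ x = qS σ x) : ρ = σ := by
  funext x
  have h1 := qS_pred hρ x
  have h2 := qS_pred hσ x
  rw [h (x-1), h x] at h1
  cases hr : ρ x <;> cases hs : σ x <;> rw [hr] at h1 <;> rw [hs] at h2 <;>
    simp at h1 h2 <;> omega

lemma UB_Rk {k : ℕ} {ρ : ℤ → Bool} {M : ℤ} (hM : UB ρ M) : UB (Rk k ρ) M := by
  intro y hy
  simp [Rk, hM y hy]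

lemma UB_Bn {ρ : ℤ → Bool} (n M : ℤ) (h : n ≤ M) : UB (Bn n ρ) M := by
  intro y hy
  simp [Bn, (by omega : n < y)]

lemma UB_Jm {ρ : ℤ → Bool} {M : ℤ} (hM : UB ρ M) (m : ℤ) : UB (Jm m ρ) (max M (m+1)) := by
  intro y hy
  have h1 : y ≠ m := by omega
  have h2 : y ≠ m + 1 := by omega
  simp only [Jm]
  split
  · simp [h1, h2, hM y (by omega)]
  · exact hM y (by omega)

lemma qS_Rk {ρ : ℤ → Bool} {M : ℤ} (hM : UB ρ M) (k : ℕ) :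
    ∀ x, qS (Rk k ρ) x = min (qS ρ x) k := by
  refine down_ind M _ (fun x hx => ?_) (fun x hx ih => ?_)
  · rw [qS_zero hM hx, qS_zero (UB_Rk hM) hx]
    simp
  · rw [qS_succ (UB_Rk (k := k) hM) x, ih, qS_succ hM x]
    by_cases h : ρ (x+1) = true <;> by_cases h2 : qS ρ (x+1) < k <;>
      simp [Rk, h, h2] <;> omega

lemma qS_Bn {ρ : ℤ → Bool} {M : ℤ} (hM : UB ρ M) (n : ℤ) :
    ∀ x, qS (Bn n ρ) x = min (qS ρ x) (n - x).toNat := by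
  refine down_ind (max M n) _ (fun x hx => ?_) (fun x hx ih => ?_)
  · have hMx : M ≤ x := le_trans (le_max_left M n) hx
    rw [qS_zero hM hMx, qS_zero (UB_Bn n (max M n) (le_max_right _ _)) hx]
    omega
  · rw [qS_succ (UB_Bn (ρ := ρ) n (max M n) (le_max_right _ _)) x, ih, qS_succ hM x]
    by_cases hx1 : n < x + 1 <;> by_cases h : ρ (x+1) = true <;>
        by_cases h2 : n - (x+1) < (qS ρ (x+1) : ℤ) <;>
      simp [Bn, hx1, h, h2] <;> omega

lemma qS_Jm {ρ : ℤ → Bool} {M : ℤ} (hM : UB ρ M) (m : ℤ) (x : ℤ) :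
    qS (Jm m ρ) x = if x = m then min (qS ρ (m-1)) (qS ρ (m+1) + 1) else qS ρ x := by
  have hMJ := UB_Jm hM m
  by_cases hc : ρ m = true ∧ ρ (m+1) = false
  · have hJ : ∀ y, Jm m ρ y = if y = m then false else if y = m+1 then true else ρ y := by
      intro y
      simp [Jm, hc.1, hc.2]
    have hagree : ∀ z, m + 1 ≤ z → qS (Jm m ρ) z = qS ρ z := by
      intro z hz
      unfold qS
      congr 1
      ext y
      simp only [Set.mem_setOf_eq]
      by_cases hxy : z < y
      · rw [hJ y, if_neg (by omega : ¬ y = m), if_neg (by omega : ¬ y = m+1)]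
      · simp [hxy]
    have hm : qS (Jm m ρ) m = 1 + qS ρ (m+1) := by
      rw [qS_succ hMJ m, hagree (m+1) le_rfl, hJ (m+1)]
      simp
    have h1 := qS_pred hM m
    have h2 := qS_succ hM m
    rw [if_pos hc.1] at h1
    rw [hc.2] at h2
    simp at h2
    have hlow : ∀ z, z ≤ m - 1 → qS (Jm m ρ) z = qS ρ z := by
      refine down_ind (m-1) (fun z => z ≤ m - 1 → qS (Jm m ρ) z = qS ρ z)
        (fun z hz => ?_) (fun z hz ih => ?_)
      · intro hz'
        have hzz : z = m - 1 := by omega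
        subst hzz
        rw [qS_pred hMJ m, qS_pred hM m, hJ m, hm]
        simp [hc.1]
        omega
      · intro _
        rw [qS_succ hMJ z, qS_succ hM z, ih (by omega), hJ (z+1),
          if_neg (by omega : ¬ z+1 = m), if_neg (by omega : ¬ z+1 = m+1)]
    by_cases hx : x = m
    · subst hx
      rw [if_pos rfl, hm]
      omega
    · rw [if_neg hx]
      rcases lt_or_gt_of_ne hx with h | h
      · exact hlow x (by omega)
      · exact hagree x (by omega)
  · have hJ : Jm m ρ = ρ := funext fun y => by simp only [Jm, if_neg hc]
    rw [hJ]
    by_cases hx : x = m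
    · rw [if_pos hx, hx]
      have h1 := qS_pred hM m
      have h2 := qS_succ hM m
      by_cases hm1 : ρ m = true <;> by_cases hm2 : ρ (m+1) = true <;>
        simp [hm1, hm2] at h1 h2 hc ⊢ <;> omega
    · rw [if_neg hx]

lemma qS_BnRk {n : ℤ} {k : ℕ} {ρ : ℤ → Bool} {M : ℤ} (hM : UB ρ M) (x : ℤ) :
    qS (Bn n (Rk k ρ)) x = min (min (qS ρ x) k) (n - x).toNat := by
  rw [qS_Bn (UB_Rk hM) n x, qS_Rk hM k x]

lemma step_lemma {n : ℤ} {k : ℕ} (hk : 1 ≤ k) (hkn : (k:ℤ) ≤ n) {ρ : ℤ → Bool} {M : ℤ}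
    (hM : UB ρ M) (hinv : ∀ x, ((k:ℤ) - x).toNat ≤ qS ρ x) (m : ℤ) :
    Bn n (Rk k (Jm m ρ)) =
      if 1 ≤ m ∧ m ≤ n - 1 then Jm m (Bn n (Rk k ρ)) else Bn n (Rk k ρ) := by
  have hMJ := UB_Jm hM m
  have hUBl : UB (Bn n (Rk k (Jm m ρ))) n := UB_Bn n n le_rfl
  have hUBr : UB (Bn n (Rk k ρ)) n := UB_Bn n n le_rfl
  have hi1 := hinv (m-1)
  have hi2 := hinv m
  have hi3 := hinv (m+1)
  by_cases hm : 1 ≤ m ∧ m ≤ n - 1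
  · rw [if_pos hm]
    refine ext_of_qS hUBl (UB_Jm hUBr m) fun x => ?_
    rw [qS_BnRk hMJ x, qS_Jm hM m x, qS_Jm hUBr m x,
      qS_BnRk hM (m-1), qS_BnRk hM (m+1)]
    by_cases hx : x = m
    · rw [if_pos hx, if_pos hx, hx]
      omega
    · rw [if_neg hx, if_neg hx, qS_BnRk hM x]
  · rw [if_neg hm]
    refine ext_of_qS hUBl hUBr fun x => ?_
    rw [qS_BnRk hMJ x, qS_Jm hM m x, qS_BnRk hM x]
    by_cases hx : x = m
    · rw [if_pos hx, hx]
      omega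
    · rw [if_neg hx]

lemma main_aux (n : ℤ) (k : ℕ) (hk : 1 ≤ k) (hkn : (k:ℤ) ≤ n) :
    ∀ (ms : List ℤ) (ρ : ℤ → Bool) (M : ℤ), UB ρ M →
      (∀ x, ((k:ℤ) - x).toNat ≤ qS ρ x) →
      Bn n (Rk k (ms.foldl (fun ρ m => Jm m ρ) ρ))
        = (ms.filter (fun m => decide (1 ≤ m ∧ m ≤ n - 1))).foldl (fun ρ m => Jm m ρ)
            (Bn n (Rk k ρ))
  | [], ρ, M, hM, hinv => rfl
  | m :: ms, ρ, M, hM, hinv => by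
    have hstep := step_lemma hk hkn hM hinv m
    have hinv' : ∀ x, ((k:ℤ) - x).toNat ≤ qS (Jm m ρ) x := by
      intro x
      rw [qS_Jm hM m x]
      by_cases hx : x = m
      · rw [if_pos hx, hx]
        have := hinv (m-1); have := hinv (m+1)
        omega
      · rw [if_neg hx]; exact hinv x
    have IH := main_aux n k hk hkn ms (Jm m ρ) (max M (m+1)) (UB_Jm hM m) hinv'
    simp only [List.foldl_cons, List.filter_cons]
    rw [IH, hstep]
    by_cases hm : 1 ≤ m ∧ m ≤ n - 1
    · simp [hm]
    · have hm' : ¬(1 ≤ m ∧ m < n) := by omega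
      simp [hm']

lemma UB_step (k : ℕ) : UB (fun x => decide (x ≤ (k:ℤ))) k := by
  intro y hy
  simp only [decide_eq_false_iff_not]
  omega

lemma qS_step (k : ℕ) : ∀ x, qS (fun x => decide (x ≤ (k:ℤ))) x = ((k:ℤ) - x).toNat := by
  refine down_ind (k:ℤ) _ (fun x hx => ?_) (fun x hx ih => ?_)
  · rw [qS_zero (UB_step k) hx]
    omega
  · rw [qS_succ (UB_step k) x, ih, if_pos (by simp; omega)]
    omega

/-- Deterministic version of Lemma 3.3: starting from the step configuration
`ρ₀ = 1_{(-∞, k]}` (with `1 ≤ k ≤ n`), applying any finite sequence of jump operators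
`J_{m_1}, …, J_{m_N}` and then `R_k` and `B_n` gives the same result as applying, in
the same order, only those jumps with locations in `[1, n-1]` to `B_n R_k ρ₀`. -/
theorem Bn_Rk_foldl_Jm (n : ℤ) (k : ℕ) (hk : 1 ≤ k) (hkn : (k : ℤ) ≤ n)
    (ms : List ℤ) :
    Bn n (Rk k (ms.foldl (fun ρ m => Jm m ρ) (fun x => decide (x ≤ (k : ℤ)))))
      = (ms.filter (fun m => decide (1 ≤ m ∧ m ≤ n - 1))).foldl
          (fun ρ m => Jm m ρ)
          (Bn n (Rk k (fun x => decide (x ≤ (k : ℤ))))) := by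
  exact main_aux n k hk hkn ms _ k (UB_step k) (fun x => le_of_eq (qS_step k x).symm)
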